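/- arXiv:1402.3119 — 2 statements merged into one kernel-verified Lean document; each statement's English description precedes it below -/
import Mathlib

section
/- Every vertex of the cellular interference graph lies in at most two triangles: for every integer r ≥ 1 and every v ∈ V(r), n_v ≤ 2 (so n_v ∈ {0,1,2}). -/
/-- Vertex set of the cellular interference graph: pairs `(a,b)` identified with
the Eisenstein integer `a + bω`, where `ω = (−1+i√3)/2`, satisfying
`|Re(a+bω)| ≤ r` and `|Im(a+bω)| ≤ (√3/2)r`, i.e. `|2a − b| ≤ 2r` and `|b| ≤ r`. -/
noncomputable def V (r : ℤ) : Finset (ℤ × ℤ) :=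
  (Finset.Icc (-(2 * r)) (2 * r) ×ˢ Finset.Icc (-r) r).filter
    (fun p => |2 * p.1 - p.2| ≤ 2 * r ∧ |p.2| ≤ r)

/-- `f(a,b) = (a+b) mod 3`. -/
def f (p : ℤ × ℤ) : ℤ := (p.1 + p.2) % 3

/-- Triangle index set: `(a,b)` with `f(a,b) ≠ 0` such that all three points
`(a,b)`, `(a,b+1)`, `(a+1,b+1)` lie in `V r`. -/
noncomputable def T (r : ℤ) : Finset (ℤ × ℤ) :=
  (V r).filter (fun p => f p ≠ 0 ∧ (p.1, p.2 + 1) ∈ V r ∧ (p.1 + 1, p.2 + 1) ∈ V r)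

/-- The vertex set of the triangle indexed by `p = (a,b)`:
`{(a,b), (a,b+1), (a+1,b+1)}`. -/
def triVerts (p : ℤ × ℤ) : Finset (ℤ × ℤ) := {p, (p.1, p.2 + 1), (p.1 + 1, p.2 + 1)}

/-- The number `n_v` of triangles of `T r` whose vertex set contains `v`. -/
noncomputable def nTri (r : ℤ) (v : ℤ × ℤ) : ℕ := ((T r).filter (fun p => v ∈ triVerts p)).card

/-- Every vertex of the cellular interference graph lies in at most two
triangles: `n_v ≤ 2` for every `v ∈ V(r)` (so `n_v ∈ {0,1,2}`). -/
theorem nTri_le_two (r : ℤ) (hr : 1 ≤ r) (v : ℤ × ℤ) (hv : v ∈ V r) :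
    nTri r v ≤ 2 := by
  unfold nTri
  have key : ∀ p ∈ (T r).filter (fun p => v ∈ triVerts p),
      (p = (v.1, v.2) ∨ p = (v.1, v.2 - 1) ∨ p = (v.1 - 1, v.2 - 1)) ∧ f p ≠ 0 := by
    intro p hp
    rw [Finset.mem_filter] at hp
    obtain ⟨hT, hmem⟩ := hp
    rw [T, Finset.mem_filter] at hT
    refine ⟨?_, hT.2.1⟩
    simp only [triVerts, Finset.mem_insert, Finset.mem_singleton, Prod.ext_iff] at hmem ⊢
    obtain ⟨a, b⟩ := p
    obtain ⟨c, d⟩ := v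
    simp only at hmem ⊢
    omega
  have hs : (v.1 + v.2) % 3 = 0 ∨ (v.1 + v.2) % 3 = 1 ∨ (v.1 + v.2) % 3 = 2 := by omega
  rcases hs with h | h | h
  · have hsub : (T r).filter (fun p => v ∈ triVerts p) ⊆
        ({(v.1, v.2 - 1), (v.1 - 1, v.2 - 1)} : Finset (ℤ × ℤ)) := by
      intro p hp
      obtain ⟨hcase, hf⟩ := key p hp
      rcases hcase with h1 | h1 | h1
      · exfalso; apply hf; rw [h1]; simp [f]; omega
      · simp [h1]
      · simp [h1]
    exact le_trans (Finset.card_le_card hsub)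
      (le_trans (Finset.card_insert_le _ _) (by simp))
  · have hsub : (T r).filter (fun p => v ∈ triVerts p) ⊆
        ({(v.1, v.2), (v.1 - 1, v.2 - 1)} : Finset (ℤ × ℤ)) := by
      intro p hp
      obtain ⟨hcase, hf⟩ := key p hp
      rcases hcase with h1 | h1 | h1
      · simp [h1]
      · exfalso; apply hf; rw [h1]; simp [f]; omega
      · simp [h1]
    exact le_trans (Finset.card_le_card hsub)
      (le_trans (Finset.card_insert_le _ _) (by simp))
  · have hsub : (T r).filter (fun p => v ∈ triVerts p) ⊆
        ({(v.1, v.2), (v.1, v.2 - 1)} : Finset (ℤ × ℤ)) := by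
      intro p hp
      obtain ⟨hcase, hf⟩ := key p hp
      rcases hcase with h1 | h1 | h1
      · simp [h1]
      · simp [h1]
      · exfalso; apply hf; rw [h1]; simp [f]; omega
    exact le_trans (Finset.card_le_card hsub)
      (le_trans (Finset.card_insert_le _ _) (by simp))
end

section
/- Lemma 2, second part (square-root bound on boundary vertices): for every integer r ≥ 1, |V_ex(r)| ≤ 7·√(|V(r)|), as an inequality of real numbers. -/
/-- The boundary vertices: those belonging to fewer than two triangles. -/
noncomputable def Vex (r : ℤ) : Finset (ℤ × ℤ) := (V r).filter (fun v => nTri r v < 2)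

lemma mem_V' {r : ℤ} {p : ℤ × ℤ} :
    p ∈ V r ↔ (-(2*r) ≤ 2*p.1 - p.2 ∧ 2*p.1 - p.2 ≤ 2*r ∧ -r ≤ p.2 ∧ p.2 ≤ r) := by
  simp only [V, Finset.mem_filter, Finset.mem_product, Finset.mem_Icc, abs_le]
  omega

lemma mem_V'' {r a b : ℤ} :
    (a, b) ∈ V r ↔ (-(2*r) ≤ 2*a - b ∧ 2*a - b ≤ 2*r ∧ -r ≤ b ∧ b ≤ r) := mem_V'

lemma mem_T' {r : ℤ} {a b : ℤ} :
    (a, b) ∈ T r ↔ ((a, b) ∈ V r ∧ (a + b) % 3 ≠ 0 ∧ (a, b + 1) ∈ V r ∧ (a + 1, b + 1) ∈ V r) := by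
  simp only [T, Finset.mem_filter, f]
  exact Finset.mem_filter

/-- Interior vertices belong to at least two triangles. -/
lemma two_le_nTri {r a b : ℤ} (h1 : -(2*r) + 2 ≤ 2*a - b) (h2 : 2*a - b ≤ 2*r - 2)
    (h3 : -r + 1 ≤ b) (h4 : b ≤ r - 1) : 2 ≤ nTri r (a, b) := by
  have hv : ((a+b) % 3 ≠ 0) → (a, b) ∈ T r := fun h => mem_T'.mpr
    ⟨mem_V''.mpr (by omega), h, mem_V''.mpr (by omega), mem_V''.mpr (by omega)⟩
  have hp : ((a+b-1) % 3 ≠ 0) → (a, b-1) ∈ T r := fun h => mem_T'.mpr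
    ⟨mem_V''.mpr (by omega), by omega, by rw [show b-1+1 = b by ring]; exact mem_V''.mpr (by omega),
     by rw [show b-1+1 = b by ring]; exact mem_V''.mpr (by omega)⟩
  have hq : ((a+b-2) % 3 ≠ 0) → (a-1, b-1) ∈ T r := fun h => mem_T'.mpr
    ⟨mem_V''.mpr (by omega), by omega,
     by rw [show b-1+1 = b by ring]; exact mem_V''.mpr (by omega),
     by rw [show a-1+1 = a by ring, show b-1+1 = b by ring]; exact mem_V''.mpr (by omega)⟩
  have tv : (a, b) ∈ triVerts (a, b) := by simp [triVerts]
  have tp : (a, b) ∈ triVerts (a, b-1) := by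
    simp only [triVerts, Finset.mem_insert, Finset.mem_singleton, Prod.mk.injEq, true_and]
    omega
  have tq : (a, b) ∈ triVerts (a-1, b-1) := by
    simp only [triVerts, Finset.mem_insert, Finset.mem_singleton, Prod.mk.injEq, true_and]
    omega
  rw [nTri]
  have key : ∀ p q : ℤ × ℤ, p ∈ T r → q ∈ T r → (a,b) ∈ triVerts p → (a,b) ∈ triVerts q →
      p ≠ q → 2 ≤ ((T r).filter (fun p => (a,b) ∈ triVerts p)).card := by
    intro p q h1 h2 h3 h4 h5
    exact Finset.one_lt_card.mpr ⟨p, Finset.mem_filter.mpr ⟨h1, h3⟩,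
      q, Finset.mem_filter.mpr ⟨h2, h4⟩, h5⟩
  have hmod : (a+b) % 3 = 0 ∨ (a+b) % 3 = 1 ∨ (a+b) % 3 = 2 := by omega
  rcases hmod with h | h | h
  · exact key _ _ (hp (by omega)) (hq (by omega)) tp tq (by simp [Prod.ext_iff]; omega)
  · exact key _ _ (hv (by omega)) (hq (by omega)) tv tq (by simp [Prod.ext_iff]; omega)
  · exact key _ _ (hv (by omega)) (hp (by omega)) tv tp (by simp [Prod.ext_iff]; omega)

/-- Boundary vertices lie in the boundary strip. -/
lemma Vex_subset (r : ℤ) :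
    Vex r ⊆ (V r).filter (fun v => 2*r - 1 ≤ |2*v.1 - v.2| ∨ |v.2| = r) := by
  classical
  intro v hv
  simp only [Vex, Finset.mem_filter] at hv ⊢
  refine ⟨hv.1, ?_⟩
  by_contra hcon
  push_neg at hcon
  have hV := mem_V'.mp hv.1
  have c1 := hcon.1
  rw [abs_lt] at c1
  have c2 := hcon.2
  have hb : -r + 1 ≤ v.2 ∧ v.2 ≤ r - 1 := by
    rcases abs_cases v.2 with ⟨he, h0⟩ | ⟨he, h0⟩ <;> rw [he] at c2 <;> omega
  have h2n := two_le_nTri (r := r) (a := v.1) (b := v.2) (by omega) (by omega) (by omega) (by omega)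
  rw [show (v.1, v.2) = v from rfl] at h2n
  omega

/-- The boundary strip has at most `12r + 4` points. -/
lemma strip_card (r : ℤ) (hr : 1 ≤ r) :
    (((V r).filter (fun v => 2*r - 1 ≤ |2*v.1 - v.2| ∨ |v.2| = r)).card : ℤ) ≤ 12*r + 4 := by
  classical
  have hsub : (V r).filter (fun v => 2*r - 1 ≤ |2*v.1 - v.2| ∨ |v.2| = r) ⊆
      ((V r).filter (fun v => 2*r - 1 ≤ |2*v.1 - v.2|)) ∪ ((V r).filter (fun v => |v.2| = r)) := by
    intro v hv
    simp only [Finset.mem_filter, Finset.mem_union] at hv ⊢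
    tauto
  have h1 : ((V r).filter (fun v => 2*r - 1 ≤ |2*v.1 - v.2|)).card ≤
      ((Finset.Icc (-r) r) ×ˢ ({0,1} : Finset ℤ)).card := by
    apply Finset.card_le_card_of_injOn
      (fun v => (v.2, if 0 ≤ 2*v.1 - v.2 then (0:ℤ) else 1))
    · intro v hv
      simp only [Finset.mem_coe, Finset.mem_filter] at hv
      have := mem_V'.mp hv.1
      simp only [Finset.mem_coe, Finset.mem_product, Finset.mem_Icc, Finset.mem_insert, Finset.mem_singleton]
      constructor
      · omega
      · split <;> simp
    · intro v hv w hw h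
      simp only [Finset.coe_filter, Set.mem_setOf_eq] at hv hw
      have hv1 := mem_V'.mp hv.1; have hw1 := mem_V'.mp hw.1
      have hv2 := hv.2; have hw2 := hw.2
      rw [le_abs] at hv2 hw2
      simp only [Prod.mk.injEq] at h
      have hb : v.2 = w.2 := h.1
      have := h.2
      rw [Prod.ext_iff]
      split_ifs at this <;> omega
  have h2 : ((V r).filter (fun v => |v.2| = r)).card ≤
      ((Finset.Icc (-(2*r)) (2*r)) ×ˢ ({0,1} : Finset ℤ)).card := by
    apply Finset.card_le_card_of_injOn (fun v => (v.1, if v.2 = r then (0:ℤ) else 1))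
    · intro v hv
      simp only [Finset.mem_coe, Finset.mem_filter] at hv
      have := mem_V'.mp hv.1
      simp only [Finset.mem_coe, Finset.mem_product, Finset.mem_Icc, Finset.mem_insert, Finset.mem_singleton]
      constructor
      · omega
      · split <;> simp
    · intro v hv w hw h
      simp only [Finset.coe_filter, Set.mem_setOf_eq] at hv hw
      have hv2 : v.2 = r ∨ v.2 = -r := by have := hv.2; rw [abs_eq (by omega)] at this; tauto
      have hw2 : w.2 = r ∨ w.2 = -r := by have := hw.2; rw [abs_eq (by omega)] at this; tauto
      simp only [Prod.mk.injEq] at h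
      rw [Prod.ext_iff]
      refine ⟨h.1, ?_⟩
      have := h.2
      split_ifs at this <;> omega
  have hc1 : (((Finset.Icc (-r:ℤ) r) ×ˢ ({0,1} : Finset ℤ)).card : ℤ) = 2*(2*r+1) := by
    rw [Finset.card_product, Int.card_Icc]
    have : ({0,1} : Finset ℤ).card = 2 := by decide
    rw [this]
    push_cast [Int.toNat_of_nonneg (by omega : (0:ℤ) ≤ r + 1 - -r)]
    ring
  have hc2 : (((Finset.Icc (-(2*r):ℤ) (2*r)) ×ˢ ({0,1} : Finset ℤ)).card : ℤ) = 2*(4*r+1) := by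
    rw [Finset.card_product, Int.card_Icc]
    have : ({0,1} : Finset ℤ).card = 2 := by decide
    rw [this]
    push_cast [Int.toNat_of_nonneg (by omega : (0:ℤ) ≤ 2*r + 1 - -(2*r))]
    ring
  have hcard := Finset.card_le_card hsub
  have hun := Finset.card_union_le ((V r).filter (fun v => 2*r - 1 ≤ |2*v.1 - v.2|))
    ((V r).filter (fun v => |v.2| = r))
  have c1 : (((V r).filter (fun v => 2*r - 1 ≤ |2*v.1 - v.2|)).card : ℤ) ≤ 2*(2*r+1) := by
    rw [← hc1]; exact_mod_cast h1
  have c2 : (((V r).filter (fun v => |v.2| = r)).card : ℤ) ≤ 2*(4*r+1) := by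
    rw [← hc2]; exact_mod_cast h2
  have : (((V r).filter (fun v => 2*r - 1 ≤ |2*v.1 - v.2| ∨ |v.2| = r)).card : ℤ) ≤
      (((V r).filter (fun v => 2*r - 1 ≤ |2*v.1 - v.2|)).card : ℤ) +
      (((V r).filter (fun v => |v.2| = r)).card : ℤ) := by exact_mod_cast le_trans hcard hun
  omega

/-- Lower bound `4r² + 2r ≤ |V r|`. -/
lemma V_card_lower (r : ℤ) (hr : 1 ≤ r) : 4*r^2 + 2*r ≤ ((V r).card : ℤ) := by
  classical
  have h : ((Finset.Icc (-r) r) ×ˢ (Finset.Icc (0:ℤ) (2*r-1))).card ≤ (V r).card := by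
    apply Finset.card_le_card_of_injOn (fun p => ((p.1 - 2*r + 1)/2 + p.2, p.1))
    · intro p hp
      simp only [Finset.mem_coe, Finset.mem_product, Finset.mem_Icc] at hp
      exact mem_V'.mpr (by
        simp only
        omega)
    · intro p hp q hq h
      simp only [Prod.mk.injEq] at h
      rw [Prod.ext_iff]
      refine ⟨h.2, ?_⟩
      have h1 := h.1
      have h2 := h.2
      omega
  have hc : (((Finset.Icc (-r:ℤ) r) ×ˢ (Finset.Icc (0:ℤ) (2*r-1))).card : ℤ) = (2*r+1)*(2*r) := by
    rw [Finset.card_product, Int.card_Icc, Int.card_Icc]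
    push_cast [Int.toNat_of_nonneg (by omega : (0:ℤ) ≤ r + 1 - -r),
      Int.toNat_of_nonneg (by omega : (0:ℤ) ≤ 2*r - 1 + 1 - 0)]
    ring
  have : ((2*r+1)*(2*r) : ℤ) ≤ ((V r).card : ℤ) := by rw [← hc]; exact_mod_cast h
  nlinarith

/-- **Lemma 2, second part:** square-root bound on the boundary vertices:
`|V_ex(r)| ≤ 7·√(|V(r)|)` as real numbers. -/
theorem card_Vex_le_sqrt (r : ℤ) (hr : 1 ≤ r) :
    ((Vex r).card : ℝ) ≤ 7 * Real.sqrt ((V r).card : ℝ) := by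
  classical
  have hVex : ((Vex r).card : ℤ) ≤ 12*r + 4 :=
    le_trans (by exact_mod_cast Finset.card_le_card (Vex_subset r)) (strip_card r hr)
  have hV := V_card_lower r hr
  have hr' : (1:ℝ) ≤ (r:ℝ) := by exact_mod_cast hr
  have a : ((Vex r).card : ℝ) ≤ 12*(r:ℝ) + 4 := by exact_mod_cast hVex
  have b : 4*(r:ℝ)^2 + 2*(r:ℝ) ≤ ((V r).card : ℝ) := by exact_mod_cast hV
  have hsq : ((Vex r).card : ℝ)^2 ≤ 49 * ((V r).card : ℝ) := by
    nlinarith [show (0:ℝ) ≤ ((Vex r).card : ℝ) from Nat.cast_nonneg _]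
  have h7 : 7 * Real.sqrt ((V r).card : ℝ) = Real.sqrt (49 * ((V r).card : ℝ)) := by
    rw [show (49:ℝ) = 7^2 by norm_num, Real.sqrt_mul (by positivity), Real.sqrt_sq (by norm_num)]
  rw [h7]
  exact (Real.le_sqrt (Nat.cast_nonneg _) (by positivity)).mpr hsq
end
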